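/- Let A be an n×n real matrix with nonnegative entries and 2m = Σ_{i,j} A_{ij} > 0, and let g : Fin n → C be a labeling into a finite label set C of cardinality c ≥ 1. Then the modularity satisfies Q(g) = Σ_{r ∈ C} (e_r(g) − a_r(g)²) ≤ 1 − 1/c. -/

import Mathlib

open Finset

/-- `e_r(g)`: fraction of edges joining vertices within community `r`. -/
noncomputable def eComm {n : ℕ} {C : Type*} [DecidableEq C]
    (A : Matrix (Fin n) (Fin n) ℝ) (m : ℝ) (g : Fin n → C) (r : C) : ℝ :=
  (1 / (2 * m)) * ∑ i, ∑ j,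
    A i j * (if g i = r then (1 : ℝ) else 0) * (if g j = r then (1 : ℝ) else 0)

/-- `a_r(g)`: fraction of edges attached to vertices in community `r`. -/
noncomputable def aComm {n : ℕ} {C : Type*} [DecidableEq C]
    (A : Matrix (Fin n) (Fin n) ℝ) (m : ℝ) (g : Fin n → C) (r : C) : ℝ :=
  (1 / (2 * m)) * ∑ i, ∑ j, A i j * (if g j = r then (1 : ℝ) else 0)

/-- The modularity `Q(g) = Σ_r (e_r - a_r²)`. -/
noncomputable def Qmod {n : ℕ} {C : Type*} [Fintype C] [DecidableEq C]
    (A : Matrix (Fin n) (Fin n) ℝ) (m : ℝ) (g : Fin n → C) : ℝ :=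
  ∑ r, (eComm A m g r - (aComm A m g r) ^ 2)

/-- For a nonnegative adjacency matrix and `c ≥ 1` labels,
the modularity satisfies `Q(g) ≤ 1 - 1/c`. -/
theorem modularity_upper_bound {n : ℕ} {C : Type*} [Fintype C] [DecidableEq C]
    (A : Matrix (Fin n) (Fin n) ℝ) (hA : ∀ i j, 0 ≤ A i j)
    (m : ℝ) (hm : 2 * m = ∑ i, ∑ j, A i j) (hmpos : 0 < 2 * m)
    (g : Fin n → C) (hc : 1 ≤ Fintype.card C) :
    Qmod A m g ≤ 1 - 1 / (Fintype.card C : ℝ) := by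
  have hcpos : (0 : ℝ) < (Fintype.card C : ℝ) := by exact_mod_cast hc
  -- sum of a_r = 1
  have hsuma : ∑ r, aComm A m g r = 1 := by
    unfold aComm
    rw [← Finset.mul_sum]
    rw [Finset.sum_comm]
    have : ∀ i : Fin n, ∑ r, ∑ j, A i j * (if g j = r then (1:ℝ) else 0)
        = ∑ j, A i j := by
      intro i
      rw [Finset.sum_comm]
      refine Finset.sum_congr rfl fun j _ => ?_
      rw [← Finset.mul_sum]; simp
    rw [Finset.sum_congr rfl fun i _ => this i, ← hm]
    field_simp
    exact div_self (ne_of_gt (by linarith))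
  -- e_r ≤ a_r
  have hea : ∀ r, eComm A m g r ≤ aComm A m g r := by
    intro r
    unfold eComm aComm
    apply mul_le_mul_of_nonneg_left _ (by positivity)
    refine Finset.sum_le_sum fun i _ => Finset.sum_le_sum fun j _ => ?_
    by_cases h1 : g i = r <;> by_cases h2 : g j = r <;>
      simp [h1, h2, hA i j, mul_nonneg (hA i j)]
  -- Cauchy-Schwarz
  have hcs : (1 : ℝ) / (Fintype.card C : ℝ) ≤ ∑ r, (aComm A m g r) ^ 2 := by
    have := sq_sum_le_card_mul_sum_sq (s := (Finset.univ : Finset C))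
      (f := fun r => aComm A m g r)
    rw [hsuma] at this
    simp only [Finset.card_univ] at this
    rw [div_le_iff₀ hcpos]
    nlinarith [this]
  have : Qmod A m g = (∑ r, eComm A m g r) - ∑ r, (aComm A m g r)^2 := by
    unfold Qmod; rw [Finset.sum_sub_distrib]
  rw [this]
  have h1 : ∑ r, eComm A m g r ≤ 1 := hsuma ▸ Finset.sum_le_sum fun r _ => hea r
  linarith
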